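/- Every simple integer-valued σ-continuous valuation on compact convex subsets of ℝ^d is identically zero, where simple means that φ vanishes on all compact convex sets of dimension strictly less than d (in particular on singletons when d ≥ 1). -/

import Mathlib

open Filter

private lemma int_seq_eventually_eq {u : ℕ → ℝ} {L : ℝ}
    (hu : ∀ n, ∃ m : ℤ, u n = m) (hL : ∃ m : ℤ, L = m)
    (h : Tendsto u atTop (nhds L)) : ∀ᶠ n in atTop, u n = L := by
  obtain ⟨mL, rfl⟩ := hL
  obtain ⟨N, hN⟩ := Metric.tendsto_atTop.mp h (1/2) (by norm_num)
  refine eventually_atTop.2 ⟨N, fun n hn => ?_⟩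
  obtain ⟨m, hm⟩ := hu n
  have hdist : |(m : ℝ) - mL| < 1/2 := by
    rw [← Real.dist_eq, ← hm]; exact hN n hn
  have h1 : ((|m - mL| : ℤ) : ℝ) < 1 := by push_cast; linarith
  have h2 : |m - mL| < 1 := by exact_mod_cast h1
  have : m = mL := by rw [abs_lt] at h2; omega
  rw [hm, this]

/-- Every simple (vanishing on lower-dimensional compact convex sets) integer-valued
σ-continuous valuation on compact convex subsets of ℝ^d is identically zero. -/
theorem simple_valuation_is_zero (d : ℕ) (hd : 0 < d)
    (φ : Set (EuclideanSpace ℝ (Fin d)) → ℝ)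
    (hint : ∀ K, ∃ m : ℤ, φ K = m)
    (hempty : φ ∅ = 0)
    (hadd : ∀ K L : Set (EuclideanSpace ℝ (Fin d)),
      IsCompact K → Convex ℝ K → IsCompact L → Convex ℝ L → Convex ℝ (K ∪ L) →
      φ (K ∪ L) + φ (K ∩ L) = φ K + φ L)
    (hsc : ∀ (K : ℕ → Set (EuclideanSpace ℝ (Fin d))) (L : Set (EuclideanSpace ℝ (Fin d))),
      (∀ n, IsCompact (K n)) → (∀ n, Convex ℝ (K n)) → (∀ n, K (n + 1) ⊆ K n) →
      IsCompact L → Convex ℝ L → (⋂ n, K n) = L →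
      Tendsto (fun n => φ (K n)) atTop (nhds (φ L)))
    (hsimple : ∀ K : Set (EuclideanSpace ℝ (Fin d)), IsCompact K → Convex ℝ K →
      Module.finrank ℝ (vectorSpan ℝ K) < d → φ K = 0) :
    ∀ K : Set (EuclideanSpace ℝ (Fin d)), IsCompact K → Convex ℝ K → φ K = 0 := by
  intro K hKc hKv
  rcases K.eq_empty_or_nonempty with rfl | hne
  · exact hempty
  set ℓ : EuclideanSpace ℝ (Fin d) →L[ℝ] ℝ := EuclideanSpace.proj (⟨0, hd⟩ : Fin d) with hℓ
  set A : ℝ → Set (EuclideanSpace ℝ (Fin d)) := fun t => K ∩ {x | ℓ x ≤ t} with hA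
  set B : ℝ → Set (EuclideanSpace ℝ (Fin d)) := fun t => K ∩ {x | t ≤ ℓ x} with hB
  have hAc : ∀ t, IsCompact (A t) := fun t =>
    hKc.inter_right (isClosed_le ℓ.continuous continuous_const)
  have hBc : ∀ t, IsCompact (B t) := fun t =>
    hKc.inter_right (isClosed_le continuous_const ℓ.continuous)
  have hAv : ∀ t, Convex ℝ (A t) := fun t =>
    hKv.inter (convex_halfSpace_le ℓ.toLinearMap.isLinear t)
  have hBv : ∀ t, Convex ℝ (B t) := fun t =>
    hKv.inter (convex_halfSpace_ge ℓ.toLinearMap.isLinear t)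
  -- the hyperplane slices have φ = 0
  have hslice : ∀ t : ℝ, φ (K ∩ {x | ℓ x = t}) = 0 := by
    intro t
    refine hsimple _ (hKc.inter_right (isClosed_eq ℓ.continuous continuous_const))
      (hKv.inter (convex_hyperplane ℓ.toLinearMap.isLinear t)) ?_
    have hsub : vectorSpan ℝ (K ∩ {x | ℓ x = t}) ≤ LinearMap.ker ℓ.toLinearMap := by
      rw [vectorSpan_def]
      refine Submodule.span_le.2 ?_
      rintro v ⟨x, ⟨hxK, hx⟩, y, ⟨hyK, hy⟩, rfl⟩
      have hx' : ℓ x = t := hx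
      have hy' : ℓ y = t := hy
      simp only [SetLike.mem_coe, LinearMap.mem_ker, ContinuousLinearMap.coe_coe, vsub_eq_sub, map_sub, hx', hy', sub_self]
    have hker : LinearMap.ker ℓ.toLinearMap < ⊤ := by
      rw [lt_top_iff_ne_top]
      intro htop
      have h1 : ℓ (EuclideanSpace.single (⟨0, hd⟩ : Fin d) (1:ℝ)) = 1 := by
        simp [hℓ]
      have h0 : ℓ (EuclideanSpace.single (⟨0, hd⟩ : Fin d) (1:ℝ)) = 0 := by
        have : EuclideanSpace.single (⟨0, hd⟩ : Fin d) (1:ℝ) ∈ LinearMap.ker ℓ.toLinearMap := by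
          rw [htop]; trivial
        simpa using this
      rw [h1] at h0; norm_num at h0
    calc Module.finrank ℝ (vectorSpan ℝ (K ∩ {x | ℓ x = t}))
        ≤ Module.finrank ℝ (LinearMap.ker ℓ.toLinearMap) := Submodule.finrank_mono hsub
      _ < Module.finrank ℝ (EuclideanSpace ℝ (Fin d)) := Submodule.finrank_lt hker.ne
      _ = d := finrank_euclideanSpace_fin
  -- the valuation identity
  have hAB : ∀ t : ℝ, φ (A t) + φ (B t) = φ K := by
    intro t
    have hunion : A t ∪ B t = K := by
      ext x
      simp only [hA, hB, Set.mem_union, Set.mem_inter_iff, Set.mem_setOf_eq]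
      constructor
      · rintro (⟨h, _⟩ | ⟨h, _⟩) <;> exact h
      · intro hx
        rcases le_total (ℓ x) t with h | h
        · exact Or.inl ⟨hx, h⟩
        · exact Or.inr ⟨hx, h⟩
    have hinter : A t ∩ B t = K ∩ {x | ℓ x = t} := by
      ext x
      simp only [hA, hB, Set.mem_inter_iff, Set.mem_setOf_eq]
      constructor
      · rintro ⟨⟨h1, h2⟩, _, h3⟩; exact ⟨h1, le_antisymm h2 h3⟩
      · rintro ⟨h1, h2⟩; exact ⟨⟨h1, h2.le⟩, h1, h2.ge⟩
    have := hadd (A t) (B t) (hAc t) (hAv t) (hBc t) (hBv t) (by rw [hunion]; exact hKv)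
    rw [hunion, hinter, hslice] at this
    linarith
  -- σ-continuity of t ↦ φ (A t) from the right, along antitone sequences
  have hAcont : ∀ (s : ℕ → ℝ) (t : ℝ), Antitone s → (∀ n, t ≤ s n) →
      Tendsto s atTop (nhds t) →
      Tendsto (fun n => φ (A (s n))) atTop (nhds (φ (A t))) := by
    intro s t hmono hle hlim
    refine hsc (fun n => A (s n)) (A t) (fun n => hAc _) (fun n => hAv _)
      (fun n => ?_) (hAc t) (hAv t) ?_
    · exact Set.inter_subset_inter_right K fun x hx =>
        le_trans hx (hmono (Nat.le_succ n))
    · ext x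
      simp only [hA, Set.mem_iInter, Set.mem_inter_iff, Set.mem_setOf_eq]
      constructor
      · intro h
        exact ⟨(h 0).1, ge_of_tendsto hlim (Eventually.of_forall fun n => (h n).2)⟩
      · intro h n
        exact ⟨h.1, h.2.trans (hle n)⟩
  -- σ-continuity of t ↦ φ (B t) from the left, along monotone sequences
  have hBcont : ∀ (s : ℕ → ℝ) (t : ℝ), Monotone s → (∀ n, s n ≤ t) →
      Tendsto s atTop (nhds t) →
      Tendsto (fun n => φ (B (s n))) atTop (nhds (φ (B t))) := by
    intro s t hmono hle hlim
    refine hsc (fun n => B (s n)) (B t) (fun n => hBc _) (fun n => hBv _)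
      (fun n => ?_) (hBc t) (hBv t) ?_
    · exact Set.inter_subset_inter_right K fun x hx =>
        le_trans (hmono (Nat.le_succ n)) hx
    · ext x
      simp only [hB, Set.mem_iInter, Set.mem_inter_iff, Set.mem_setOf_eq]
      constructor
      · intro h
        exact ⟨(h 0).1, le_of_tendsto' hlim fun n => (h n).2⟩
      · intro h n
        exact ⟨h.1, (hle n).trans h.2⟩
  -- bounds
  obtain ⟨xM, hxM, hmax⟩ := hKc.exists_isMaxOn hne ℓ.continuous.continuousOn
  obtain ⟨xm, hxm, hmin⟩ := hKc.exists_isMinOn hne ℓ.continuous.continuousOn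
  set a : ℝ := ℓ xm - 1 with ha
  set b : ℝ := ℓ xM + 1 with hb
  have hmM : ℓ xm ≤ ℓ xM := isMinOn_iff.mp hmin xM hxM
  have hab : a < b := by rw [ha, hb]; linarith
  have hAa : A a = ∅ := by
    ext x
    simp only [hA, Set.mem_inter_iff, Set.mem_setOf_eq, Set.mem_empty_iff_false, iff_false,
      not_and]
    intro hxK
    have := isMinOn_iff.mp hmin x hxK
    rw [ha]; intro h; linarith
  have hAb : A b = K := by
    rw [hA]
    refine Set.inter_eq_left.2 fun x hxK => ?_
    have := isMaxOn_iff.mp hmax x hxK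
    simp only [Set.mem_setOf_eq, hb]; linarith
  have hfa : φ (A a) = 0 := by rw [hAa]; exact hempty
  -- the sweeping set
  set T : Set ℝ := {t : ℝ | t ∈ Set.Icc a b ∧ ∀ s ∈ Set.Icc a t, φ (A s) = 0} with hT
  have haT : a ∈ T := by
    refine ⟨⟨le_refl a, hab.le⟩, fun s hs => ?_⟩
    have : s = a := le_antisymm hs.2 hs.1
    rw [this]; exact hfa
  have hTne : T.Nonempty := ⟨a, haT⟩
  have hTbdd : BddAbove T := ⟨b, fun t ht => ht.1.2⟩
  set c : ℝ := sSup T with hc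
  have hac : a ≤ c := le_csSup hTbdd haT
  have hcb : c ≤ b := csSup_le hTne fun t ht => ht.1.2
  have hstepA : ∀ s, a ≤ s → s < c → φ (A s) = 0 := by
    intro s has hscc
    obtain ⟨t, htT, hst⟩ := exists_lt_of_lt_csSup hTne hscc
    exact htT.2 s ⟨has, hst.le⟩
  -- left closure: φ (A c) = 0
  have hfc : φ (A c) = 0 := by
    rcases eq_or_lt_of_le hac with heq | hlt
    · rw [← heq]; exact hfa
    · set s : ℕ → ℝ := fun n => max a (c - 1/(n+1)) with hs
      have hmono : Monotone s := by
        intro m n hmn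
        refine max_le_max le_rfl (sub_le_sub_left ?_ c)
        apply one_div_le_one_div_of_le
        · positivity
        · have := (Nat.cast_le (α := ℝ)).2 hmn; linarith
      have hle : ∀ n, s n ≤ c := fun n =>
        max_le hlt.le (by linarith [one_div_pos.2 (by positivity : (0:ℝ) < (n:ℝ)+1)])
      have hlim : Tendsto s atTop (nhds c) := by
        have h1 : Tendsto (fun n : ℕ => c - 1/((n:ℝ)+1)) atTop (nhds c) := by
          have h0 : Tendsto (fun n : ℕ => 1/((n:ℝ)+1)) atTop (nhds 0) :=
            tendsto_one_div_add_atTop_nhds_zero_nat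
          simpa using (tendsto_const_nhds (X := ℝ) (α := ℕ) (x := c) (f := atTop)).sub h0
        have h2 := (tendsto_const_nhds (X := ℝ) (α := ℕ) (x := a) (f := atTop)).max h1
        rw [max_eq_right hlt.le] at h2
        exact h2
      have hgs : ∀ n, φ (B (s n)) = φ K := by
        intro n
        have hsn : s n < c := by
          apply max_lt hlt
          have : (0:ℝ) < 1/((n:ℝ)+1) := by positivity
          linarith
        have h1 := hAB (s n)
        have h0 := hstepA (s n) (le_max_left _ _) hsn
        linarith
      have hBlim := hBcont s c hmono hle hlim
      rw [show (fun n => φ (B (s n))) = fun _ => φ K from funext hgs] at hBlim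
      have hBcK : φ (B c) = φ K := tendsto_nhds_unique hBlim tendsto_const_nhds
      have := hAB c
      linarith
  -- right extension: c = b
  have hceq : c = b := by
    by_contra hne'
    have hlt : c < b := lt_of_le_of_ne hcb hne'
    have H : ∀ t, c < t → t ≤ b → ∃ s, c < s ∧ s ≤ t ∧ φ (A s) ≠ 0 := by
      intro t hct htb
      by_contra h
      push_neg at h
      have htT : t ∈ T := by
        refine ⟨⟨hac.trans hct.le, htb⟩, fun s hs => ?_⟩
        rcases lt_or_ge s c with h1 | h1
        · exact hstepA s hs.1 h1
        · rcases eq_or_lt_of_le h1 with heq | h2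
          · rw [← heq]; exact hfc
          · exact h s h2 hs.2
      have : t ≤ c := le_csSup hTbdd htT
      linarith
    choose! F h1 h2 h3 using H
    set u : ℕ → ℝ := fun n => Nat.rec (F b) (fun _ p => F ((c + p)/2)) n with hu
    have hu0 : u 0 = F b := rfl
    have husucc : ∀ n, u (n+1) = F ((c + u n)/2) := fun n => rfl
    have key : ∀ n, c < u n ∧ u n ≤ b ∧ u n - c ≤ (b - c)/2^n ∧ φ (A (u n)) ≠ 0 := by
      intro n
      induction n with
      | zero =>
        rw [hu0]
        exact ⟨h1 b hlt le_rfl, h2 b hlt le_rfl,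
          by simpa using sub_le_sub_right (h2 b hlt le_rfl) c, h3 b hlt le_rfl⟩
      | succ n ih =>
        obtain ⟨hc', hb', hgeo, _⟩ := ih
        have hmid1 : c < (c + u n)/2 := by linarith
        have hmid2 : (c + u n)/2 ≤ b := by linarith
        have e1 := h1 _ hmid1 hmid2
        have e2 := h2 _ hmid1 hmid2
        have e3 := h3 _ hmid1 hmid2
        rw [husucc]
        refine ⟨e1, e2.trans hmid2, ?_, e3⟩
        have hp : (2:ℝ)^(n+1) = 2^n * 2 := by rw [pow_succ]
        have hpos : (0:ℝ) < 2^n := by positivity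
        calc F ((c + u n)/2) - c ≤ (c + u n)/2 - c := by linarith
          _ = (u n - c)/2 := by ring
          _ ≤ ((b - c)/2^n)/2 := by linarith
          _ = (b - c)/2^(n+1) := by rw [hp]; ring
    have hanti : Antitone u := by
      apply antitone_nat_of_succ_le
      intro n
      have hc' := (key n).1
      have hb' := (key n).2.1
      have hmid1 : c < (c + u n)/2 := by linarith
      have hmid2 : (c + u n)/2 ≤ b := by linarith
      have := h2 _ hmid1 hmid2
      rw [husucc]
      linarith
    have hulim : Tendsto u atTop (nhds c) := by
      have h0 : Tendsto (fun n : ℕ => ((1:ℝ)/2)^n) atTop (nhds 0) :=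
        tendsto_pow_atTop_nhds_zero_of_lt_one (by norm_num) (by norm_num)
      have hupper : Tendsto (fun n : ℕ => c + (b - c) * (1/2)^n) atTop (nhds c) := by
        simpa using (tendsto_const_nhds (X := ℝ) (α := ℕ) (x := c) (f := atTop)).add (h0.const_mul (b - c))
      refine tendsto_of_tendsto_of_tendsto_of_le_of_le tendsto_const_nhds hupper
        (fun n => (key n).1.le) (fun n => ?_)
      have hgeo := (key n).2.2.1
      have h2n : (b - c) * (1/2:ℝ)^n = (b - c)/2^n := by
        rw [div_pow, one_pow]; ring
      rw [h2n]
      linarith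
    have hcont := hAcont u c hanti (fun n => (key n).1.le) hulim
    rw [hfc] at hcont
    have hev := int_seq_eventually_eq (fun n => hint _) ⟨0, by norm_num⟩ hcont
    obtain ⟨n, hn⟩ := hev.exists
    exact (key n).2.2.2 hn
  have : φ (A b) = 0 := hceq ▸ hfc
  rw [hAb] at this
  exact this
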